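/- arXiv:2410.23869 — 3 statements merged into one kernel-verified Lean document; each statement's English description precedes it below -/
import Mathlib

section
/- Let n ≥ 1 be an integer, let δ ∈ [0,1]^n satisfy (n − (n mod 2))/2 ≤ δ_1 + … + δ_n ≤ (n + (n mod 2))/2, and let r ∈ [0,1)^n. Then the number of indices i ∈ [n] with r_i > δ_i deviates from r_1 + … + r_n by at most (n + (n mod 2))/2, i.e. | #{i ∈ [n] : r_i > δ_i} − ∑_{i=1}^n r_i | ≤ (n + (n mod 2))/2. -/
open scoped Classical

/-- if the shifts `δ_i ∈ [0,1]` sum to a value in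
`[(n − n mod 2)/2, (n + n mod 2)/2]` and `r_i ∈ [0,1)`, then the number of indices with
`r_i > δ_i` deviates from `∑ r_i` by at most `(n + n mod 2)/2`. -/
theorem stmt_17 (n : ℕ) (hn : 1 ≤ n) (δ r : Fin n → ℝ)
    (hδ : ∀ i, δ i ∈ Set.Icc (0 : ℝ) 1) (hr : ∀ i, r i ∈ Set.Ico (0 : ℝ) 1)
    (hlo : ((n : ℝ) - (n % 2 : ℕ)) / 2 ≤ ∑ i, δ i)
    (hhi : ∑ i, δ i ≤ ((n : ℝ) + (n % 2 : ℕ)) / 2) :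
    |((Finset.univ.filter fun i : Fin n => δ i < r i).card : ℝ) - ∑ i, r i| ≤
      ((n : ℝ) + (n % 2 : ℕ)) / 2 := by
  have hcard : ((Finset.univ.filter fun i : Fin n => δ i < r i).card : ℝ)
      = ∑ i, (if δ i < r i then (1 : ℝ) else 0) := by
    rw [Finset.card_filter]
    push_cast
    rfl
  rw [hcard, ← Finset.sum_sub_distrib, abs_le]
  constructor
  · have h1 : -(∑ i, δ i) ≤ ∑ i, ((if δ i < r i then (1 : ℝ) else 0) - r i) := by
      rw [← Finset.sum_neg_distrib]
      apply Finset.sum_le_sum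
      intro i _
      by_cases h : δ i < r i
      · simp only [h, if_pos]
        have := (hr i).2
        have := (hδ i).1
        linarith
      · simp only [h, if_neg, not_false_iff]
        push_neg at h
        linarith [(hr i).1]
    linarith
  · have h2 : ∑ i, ((if δ i < r i then (1 : ℝ) else 0) - r i) ≤ ∑ i, (1 - δ i) := by
      apply Finset.sum_le_sum
      intro i _
      by_cases h : δ i < r i
      · simp only [h, if_pos]
        linarith
      · simp only [h, if_neg, not_false_iff]
        linarith [(hr i).1, (hδ i).2]
    have h3 : ∑ i : Fin n, (1 - δ i) = (n : ℝ) - ∑ i, δ i := by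
      rw [Finset.sum_sub_distrib]
      simp
    linarith
end

section
/- For every i ∈ [n], let s_i : ℕ₀ → ℝ be a signpost sequence, and assume the fixed-divisor method f given by f_i(p,H) = N_{s_i}(q_i) satisfies quota, i.e., ⌊q_i⌋ ≤ f_i(p,H) ≤ ⌈q_i⌉ for every instance (p,H) and every i. Then for every ε > 0 there exist a population vector p ∈ ℕ^n and an integer house size H ≥ 1 such that |∑_{i=1}^n f_i(p,H) − H| ≥ n/2 − 1 − ε. -/
open scoped Classical
open Set

noncomputable section

/-- The stationary rounding rule `⟦r⟧_δ ⊆ ℕ`. -/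
def roundSet (δ r : ℝ) : Set ℕ :=
  {x | (r < δ ∧ x = 0) ∨
       (∃ t : ℕ, x = t ∧ (t : ℝ) - 1 + δ < r ∧ r < (t : ℝ) + δ) ∨
       (∃ t : ℕ, (x = t ∨ x = t + 1) ∧ r = (t : ℝ) + δ)}

/-- The output set `f(p,H;δ)` of the stationary `δ`-divisor method. -/
def divisorOutput {n : ℕ} (p : Fin n → ℕ) (H : ℕ) (δ : ℝ) : Set (Fin n → ℕ) :=
  {x | (∑ i, x i) = H ∧ ∃ lam : ℝ, 0 < lam ∧ ∀ i, x i ∈ roundSet δ (lam * (p i : ℝ))}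

/-- The quota `q_i = p_i · H / P` of state `i`. -/
def quota {n : ℕ} (p : Fin n → ℕ) (H : ℕ) (i : Fin n) : ℝ :=
  (p i : ℝ) * (H : ℝ) / (∑ j, (p j : ℝ))

/-- A signpost sequence. -/
def IsSignpost (s : ℕ → ℝ) : Prop :=
  (∀ t : ℕ, (t : ℝ) ≤ s t ∧ s t ≤ (t : ℝ) + 1) ∧
  ((∃ t' : ℕ, s t' = (t' : ℝ)) → ∀ t : ℕ, s t < (t : ℝ) + 1) ∧
  ((∃ t' : ℕ, s t' = (t' : ℝ) + 1) → ∀ t : ℕ, (t : ℝ) < s t)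

/-- `N_s(r) = #{k ∈ ℕ₀ : s(k) < r}`. -/
def Nsign (s : ℕ → ℝ) (r : ℝ) : ℕ := {k : ℕ | s k < r}.ncard

lemma exists_rat_approx (n : ℕ) (a : Fin n → ℝ) (ha : ∀ i, 0 ≤ a i) (T : ℕ)
    (hT : (T : ℝ) < ∑ i, a i) :
    ∃ q : Fin n → ℚ, (∀ i, 0 ≤ q i) ∧ (∀ i, ((q i : ℝ) < a i ∨ q i = 0)) ∧
      ∑ i, q i = (T : ℚ) := by
  have hn : 0 < n := by
    rcases Nat.eq_zero_or_pos n with h | h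
    · exfalso; subst h; simp at hT
      exact absurd hT (not_lt.mpr (by positivity))
    · exact h
  have hcpos : 0 < ((∑ i, a i) - T) / n :=
    div_pos (by linarith) (by exact_mod_cast hn)
  set c : ℝ := ((∑ i, a i) - T) / n with hc
  have hchoice : ∀ i, ∃ r : ℚ, 0 ≤ r ∧ ((r : ℝ) < a i ∨ r = 0) ∧ a i - c < r := by
    intro i
    rcases eq_or_lt_of_le (ha i) with h0 | h0
    · exact ⟨0, le_refl _, Or.inr rfl, by simp [← h0]; linarith⟩
    · obtain ⟨r, hr1, hr2⟩ := exists_rat_btwn (show max (a i - c) 0 < a i by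
        apply max_lt (by linarith) h0)
      refine ⟨r, ?_, Or.inl hr2, ?_⟩
      · exact_mod_cast le_of_lt (lt_of_le_of_lt (le_max_right _ _) hr1)
      · exact lt_of_le_of_lt (le_max_left _ _) hr1
  choose r hr0 hra hrc using hchoice
  have hRT : (T : ℚ) < ∑ i, r i := by
    have : (T : ℝ) < ((∑ i, r i : ℚ) : ℝ) := by
      have h1 : ∑ i, (a i - c) < ∑ i, ((r i : ℝ)) := Finset.sum_lt_sum_of_nonempty
        (Finset.univ_nonempty_iff.mpr (Fin.pos_iff_nonempty.mp hn)) (fun i _ => hrc i)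
      have h2 : ∑ i, (a i - c) = (∑ i, a i) - n * c := by
        rw [Finset.sum_sub_distrib]; simp [Finset.sum_const, mul_comm]
      have h3 : (n : ℝ) * c = (∑ i, a i) - T := by
        rw [hc]; field_simp
      have h4 : ((∑ i, r i : ℚ) : ℝ) = ∑ i, ((r i : ℚ) : ℝ) := by push_cast; rfl
      linarith
    exact_mod_cast this
  have hRpos : 0 < ∑ i, r i := lt_of_le_of_lt (by positivity) hRT
  refine ⟨fun i => r i * T / (∑ j, r j), fun i => div_nonneg (mul_nonneg (hr0 i) (by positivity)) (le_of_lt hRpos), fun i => ?_, ?_⟩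
  · simp only
    rcases hra i with h | h
    · rcases eq_or_lt_of_le (hr0 i) with h0 | h0
      · right; rw [← h0]; ring
      · left
        have hq : r i * T / (∑ j, r j) ≤ r i := by
          rw [div_le_iff₀ hRpos]
          nlinarith [le_of_lt hRT]
        calc ((r i * T / (∑ j, r j) : ℚ) : ℝ) ≤ ((r i : ℚ) : ℝ) := by exact_mod_cast hq
          _ < a i := h
    · right; rw [h]; ring
  · rw [← Finset.sum_div, ← Finset.sum_mul]
    field_simp

lemma nsign_eq (s : ℕ → ℝ) (hs : ∀ t : ℕ, (t : ℝ) ≤ s t) (h0 : s 0 < 1) (r : ℝ)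
    (h1 : 1 ≤ r) (h2 : r ≤ 2) : Nsign s r = if s 1 < r then 2 else 1 := by
  have hbig : ∀ k : ℕ, 2 ≤ k → ¬ (s k < r) := by
    intro k hk hlt
    have : (2 : ℝ) ≤ (k : ℝ) := by exact_mod_cast hk
    linarith [hs k]
  unfold Nsign
  split
  case isTrue h =>
    have hset : {k : ℕ | s k < r} = {0, 1} := by
      ext k
      simp only [Set.mem_setOf_eq, Set.mem_insert_iff, Set.mem_singleton_iff]
      constructor
      · intro hk
        by_contra hne
        push_neg at hne
        exact hbig k (by omega) hk
      · rintro (rfl | rfl)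
        · linarith
        · exact h
    rw [hset, Set.ncard_pair (by norm_num)]
  case isFalse h =>
    have hset : {k : ℕ | s k < r} = {0} := by
      ext k
      simp only [Set.mem_setOf_eq, Set.mem_singleton_iff]
      constructor
      · intro hk
        by_contra hne
        rcases Nat.lt_or_ge k 2 with hk2 | hk2
        · interval_cases k
          · exact hne rfl
          · exact h hk
        · exact hbig k hk2 hk
      · rintro rfl; linarith
    rw [hset, Set.ncard_singleton]

lemma exists_nat_mul (θ : ℚ) (hθ : 0 ≤ θ) (D : ℕ) (hden : θ.den ∣ D) :
    ∃ c : ℕ, (c : ℚ) = D * θ := by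
  obtain ⟨k, hk⟩ := hden
  refine ⟨k * θ.num.toNat, ?_⟩
  have hnum : (θ.num.toNat : ℤ) = θ.num := Int.toNat_of_nonneg (Rat.num_nonneg.mpr hθ)
  have h1 : ((θ.num.toNat : ℕ) : ℚ) = (θ.num : ℚ) := by exact_mod_cast hnum
  have h2 : (θ.den : ℚ) * θ = (θ.num : ℚ) := by
    rw [mul_comm, Rat.mul_den_eq_num]
  push_cast [hk, h1]
  rw [← h2]; ring

/-- Realize quotas `1 + θ i` with a concrete population vector. -/
lemma realize (n : ℕ) (hn : 1 ≤ n) (θ : Fin n → ℚ) (hθ0 : ∀ i, 0 ≤ θ i)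
    (hθ1 : ∀ i, θ i ≤ 1) (S : ℕ) (hS : (S : ℚ) = ∑ i, θ i) :
    ∃ (p : Fin n → ℕ) (H : ℕ), (∀ i, 0 < p i) ∧ 1 ≤ H ∧ H = n + S ∧
      ∀ i, quota p H i = 1 + ((θ i : ℝ)) := by
  set D : ℕ := ∏ i, (θ i).den with hD
  have hDpos : 0 < D := Finset.prod_pos (fun i _ => (θ i).pos)
  have hc : ∀ i, ∃ c : ℕ, (c : ℚ) = D * θ i := fun i =>
    exists_nat_mul (θ i) (hθ0 i) D (Finset.dvd_prod_of_mem _ (Finset.mem_univ i))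
  choose c hcq using hc
  set p : Fin n → ℕ := fun i => D + c i with hp
  set H : ℕ := n + S with hH
  have hsumc : ∑ i, c i = D * S := by
    have : ((∑ i, c i : ℕ) : ℚ) = ((D * S : ℕ) : ℚ) := by
      push_cast
      rw [Finset.sum_congr rfl (fun i _ => hcq i), ← Finset.mul_sum, ← hS]
    exact_mod_cast this
  have hsump : ∑ j, p j = D * H := by
    simp only [hp, Finset.sum_add_distrib, Finset.sum_const, Finset.card_univ,
      Fintype.card_fin, smul_eq_mul, hsumc, hH]
    ring
  refine ⟨p, H, fun i => by positivity, by omega, rfl, fun i => ?_⟩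
  unfold quota
  have hsumR : (∑ j, ((p j : ℕ) : ℝ)) = (D : ℝ) * H := by
    rw [← Nat.cast_sum]
    exact_mod_cast hsump
  rw [hsumR]
  have hHpos : (0:ℝ) < H := by positivity
  have hDR : (0:ℝ) < (D:ℝ) := by exact_mod_cast hDpos
  have hcR : ((c i : ℕ) : ℝ) = (D : ℝ) * ((θ i : ℚ) : ℝ) := by
    exact_mod_cast congrArg (Rat.cast (K := ℝ)) (hcq i)
  have hpR : ((p i : ℕ) : ℝ) = (D : ℝ) * (1 + ((θ i : ℚ) : ℝ)) := by
    simp only [hp]; push_cast [hcR]; ring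
  rw [hpR]
  field_simp

/-- every quota-compliant fixed-divisor method can deviate from the house size
by at least `n/2 − 1 − ε` on some instance. -/
theorem stmt_18 (n : ℕ) (hn : 1 ≤ n) (s : Fin n → ℕ → ℝ) (hs : ∀ i, IsSignpost (s i))
    (hquota : ∀ (p : Fin n → ℕ), (∀ i, 0 < p i) → ∀ H : ℕ, 1 ≤ H → ∀ i : Fin n,
      ⌊quota p H i⌋ ≤ (Nsign (s i) (quota p H i) : ℤ) ∧
        (Nsign (s i) (quota p H i) : ℤ) ≤ ⌈quota p H i⌉)
    (ε : ℝ) (hε : 0 < ε) :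
    ∃ (p : Fin n → ℕ), (∀ i, 0 < p i) ∧ ∃ H : ℕ, 1 ≤ H ∧
      (n : ℝ) / 2 - 1 - ε ≤ |(∑ i, (Nsign (s i) (quota p H i) : ℝ)) - (H : ℝ)| := by
  have hlow : ∀ i, ∀ t : ℕ, (t : ℝ) ≤ s i t := fun i t => ((hs i).1 t).1
  have hnR : (0:ℝ) < n := by exact_mod_cast hn
  -- uniform quota computation for p ≡ 1
  have hquota1 : ∀ (H : ℕ) (i : Fin n), quota (fun _ => 1) H i = (H : ℝ) / n := by
    intro H i
    unfold quota
    simp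
  -- Step 1 : s i 0 < 1
  have hs0 : ∀ i, s i 0 < 1 := by
    intro i
    have h := (hquota (fun _ => 1) (fun _ => one_pos) n hn i).1
    rw [hquota1 n i, div_self (ne_of_gt hnR)] at h
    norm_num at h
    have hne : Nsign (s i) 1 ≠ 0 := by omega
    obtain ⟨k, hk⟩ := Set.nonempty_of_ncard_ne_zero hne
    simp only [Set.mem_setOf_eq] at hk
    have hk1 : (k:ℝ) < 1 := lt_of_le_of_lt (hlow i k) hk
    have : k = 0 := by exact_mod_cast Nat.lt_one_iff.mp (by exact_mod_cast hk1)
    rwa [← this]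
  -- Step 2 : s i 1 < 2
  have hs1 : ∀ i, s i 1 < 2 := by
    intro i
    have h := (hquota (fun _ => 1) (fun _ => one_pos) (2*n) (by omega) i).1
    have hq2 : quota (fun _ => 1) (2*n) i = 2 := by
      rw [hquota1]
      push_cast
      field_simp
    rw [hq2] at h
    norm_num at h
    by_contra hcon
    rw [nsign_eq (s i) (hlow i) (hs0 i) 2 (by norm_num) (by norm_num), if_neg hcon] at h
    omega
  set δ : Fin n → ℝ := fun i => s i 1 - 1 with hδ
  have hδ0 : ∀ i, 0 ≤ δ i := by
    intro i
    have := hlow i 1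
    simp only [hδ, Nat.cast_one] at *
    linarith
  have hδ1 : ∀ i, δ i < 1 := by
    intro i
    have := hs1 i
    simp only [hδ]
    linarith
  set T : ℕ := (n-1)/2 with hT
  have hTfacts : 2*T ≤ n - 1 ∧ n ≤ 2*T + 2 ∧ T ≤ n := by omega
  have TR1 : (T:ℝ) < (n:ℝ)/2 := by
    have h1 : 2*T + 1 ≤ n := by omega
    have : (2*T + 1 : ℝ) ≤ n := by exact_mod_cast h1
    linarith
  have TR2 : (n:ℝ)/2 - 1 ≤ (T:ℝ) := by
    have h1 : n ≤ 2*T + 2 := hTfacts.2.1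
    have : (n:ℝ) ≤ 2*T + 2 := by exact_mod_cast h1
    linarith
  by_cases hA : (n:ℝ)/2 ≤ ∑ i, δ i
  · -- Case A : round everything down
    obtain ⟨q, hq0, hqa, hqsum⟩ := exists_rat_approx n δ hδ0 T (lt_of_lt_of_le TR1 hA)
    have hq1 : ∀ i, q i ≤ 1 := by
      intro i
      rcases hqa i with h | h
      · have : (q i : ℝ) < 1 := lt_trans h (hδ1 i)
        exact_mod_cast le_of_lt this
      · rw [h]; norm_num
    obtain ⟨p, H, hp, hH1, hHeq, hqv⟩ := realize n hn q hq0 hq1 T hqsum.symm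
    refine ⟨p, hp, H, hH1, ?_⟩
    have hNs : ∀ i, Nsign (s i) (quota p H i) = 1 := by
      intro i
      have e0 : (0:ℝ) ≤ (q i : ℝ) := by exact_mod_cast hq0 i
      have e1 : ((q i):ℝ) ≤ 1 := by exact_mod_cast hq1 i
      rw [hqv i, nsign_eq (s i) (hlow i) (hs0 i) _ (by linarith) (by linarith)]
      rw [if_neg]
      push_neg
      rcases hqa i with h | h
      · simp only [hδ] at h; linarith
      · rw [h]; push_cast
        have := hlow i 1
        simp only [Nat.cast_one] at this
        linarith
    have hsum : (∑ i, (Nsign (s i) (quota p H i) : ℝ)) = n := by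
      rw [Finset.sum_congr rfl (fun i _ => by rw [hNs i])]
      simp
    rw [hsum, hHeq]
    have : ((n + T : ℕ) : ℝ) = (n:ℝ) + T := by push_cast; ring
    rw [this]
    rw [show (n:ℝ) - ((n:ℝ) + T) = -(T:ℝ) by ring, abs_neg, abs_of_nonneg (by positivity)]
    linarith
  · -- Case B : round everything up
    push_neg at hA
    have hsum1 : (T:ℝ) < ∑ i, (1 - δ i) := by
      have : ∑ i, (1 - δ i) = (n:ℝ) - ∑ i, δ i := by
        rw [Finset.sum_sub_distrib]; simp
      rw [this]; linarith
    obtain ⟨q, hq0, hqa, hqsum⟩ := exists_rat_approx n (fun i => 1 - δ i)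
      (fun i => by have := hδ1 i; linarith) T hsum1
    have hq1 : ∀ i, q i ≤ 1 := by
      intro i
      rcases hqa i with h | h
      · have h2 : (q i : ℝ) ≤ 1 := by have := hδ0 i; linarith
        exact_mod_cast h2
      · rw [h]; norm_num
    obtain ⟨p, H, hp, hH1, hHeq, hqv⟩ := realize n hn (fun i => 1 - q i)
      (fun i => show (0:ℚ) ≤ 1 - q i by linarith [hq1 i])
      (fun i => show (1:ℚ) - q i ≤ 1 by linarith [hq0 i])
      (n - T) (by
        push_cast [Nat.cast_sub hTfacts.2.2]
        rw [Finset.sum_sub_distrib, ← hqsum]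
        simp)
    refine ⟨p, hp, H, hH1, ?_⟩
    have hNs : ∀ i, Nsign (s i) (quota p H i) = 2 := by
      intro i
      have hr : quota p H i = 2 - (q i : ℝ) := by
        rw [hqv i]; push_cast; ring
      have e0 : (0:ℝ) ≤ (q i : ℝ) := by exact_mod_cast hq0 i
      have e1 : ((q i):ℝ) ≤ 1 := by exact_mod_cast hq1 i
      rw [hr, nsign_eq (s i) (hlow i) (hs0 i) _ (by linarith) (by linarith)]
      rw [if_pos]
      rcases hqa i with h | h
      · simp only [hδ] at h; linarith
      · rw [h]; push_cast; linarith [hs1 i]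
    have hsum : (∑ i, (Nsign (s i) (quota p H i) : ℝ)) = 2*n := by
      rw [Finset.sum_congr rfl (fun i _ => by rw [hNs i])]
      push_cast
      simp [mul_comm]
    rw [hsum, hHeq]
    have hHR : ((n + (n - T) : ℕ) : ℝ) = 2*(n:ℝ) - T := by
      push_cast [Nat.cast_sub hTfacts.2.2]; ring
    rw [hHR, show 2*(n:ℝ) - (2*(n:ℝ) - T) = (T:ℝ) by ring,
      abs_of_nonneg (by positivity)]
    linarith
end
end

section
/- Let (p,H) be an apportionment instance with P = p_1 + … + p_n, and let K(p,H) ⊆ ℝ^{[n]×[H]} be the polytope of all x satisfying: ∑_{i=1}^n x(i,t) = 1 for every t ∈ [H]; ⌊t·p_i/P⌋ ≤ ∑_{ℓ=1}^t x(i,ℓ) ≤ ⌈t·p_i/P⌉ for every i ∈ [n] and t ∈ [H]; and x(i,t) ≥ 0 for every i ∈ [n] and t ∈ [H]. Then every extreme point of K(p,H) has all coordinates in {0,1}; in particular the linear program is integral. -/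
open scoped Classical

noncomputable section

/-- The polytope `K(p,H)` of fractional house-monotone, quota-compliant seat assignments:
`x (i,t) = 1` means seat `t` is given to state `i`. Seat `t : Fin H` represents seat `t+1`. -/
def apportionmentPolytope {n : ℕ} (p : Fin n → ℕ) (H : ℕ) : Set (Fin n → Fin H → ℝ) :=
  {x | (∀ t : Fin H, ∑ i, x i t = 1) ∧
       (∀ (i : Fin n) (t : Fin H),
          (⌊(((t : ℕ) + 1 : ℝ)) * (p i : ℝ) / (∑ j, (p j : ℝ))⌋ : ℝ) ≤
              ∑ ℓ ∈ Finset.univ.filter (fun ℓ : Fin H => ℓ ≤ t), x i ℓ ∧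
            ∑ ℓ ∈ Finset.univ.filter (fun ℓ : Fin H => ℓ ≤ t), x i ℓ ≤
              (⌈(((t : ℕ) + 1 : ℝ)) * (p i : ℝ) / (∑ j, (p j : ℝ))⌉ : ℝ)) ∧
       (∀ (i : Fin n) (t : Fin H), 0 ≤ x i t)}

namespace Stmt19

/-- The subring of reals that are integers. -/
def ZR : Subring ℝ := (Int.castRingHom ℝ).range

lemma mem_ZR_iff {r : ℝ} : r ∈ ZR ↔ ∃ z : ℤ, (z : ℝ) = r := by
  simp [ZR, RingHom.mem_range]

lemma intCast_mem_ZR (z : ℤ) : (z : ℝ) ∈ ZR := ⟨z, rfl⟩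

lemma natCast_mem_ZR (m : ℕ) : (m : ℝ) ∈ ZR := ⟨m, by simp⟩

variable {n H : ℕ}

/-- Cumulative sums. -/
def Ysum (x : Fin n → Fin H → ℝ) (i : Fin n) (t : Fin H) : ℝ :=
  ∑ ℓ ∈ Finset.univ.filter (fun ℓ : Fin H => ℓ ≤ t), x i ℓ

lemma filter_le_eq_Iic (t : Fin H) :
    Finset.univ.filter (fun ℓ : Fin H => ℓ ≤ t) = Finset.Iic t := by
  ext ℓ; simp

lemma Ysum_zero (x : Fin n → Fin H → ℝ) (i : Fin n) (t : Fin H) (h : (t : ℕ) = 0) :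
    Ysum x i t = x i t := by
  have ht : Finset.univ.filter (fun ℓ : Fin H => ℓ ≤ t) = {t} := by
    ext ℓ
    simp only [Finset.mem_filter, Finset.mem_univ, true_and, Finset.mem_singleton]
    rw [Fin.le_def]
    constructor
    · intro hle; exact Fin.ext (by omega)
    · rintro rfl; exact le_rfl
  rw [Ysum, ht, Finset.sum_singleton]

lemma Ysum_succ (x : Fin n → Fin H → ℝ) (i : Fin n) (s t : Fin H) (h : (s : ℕ) + 1 = (t : ℕ)) :
    Ysum x i t = Ysum x i s + x i t := by
  have hst : s < t := by rw [Fin.lt_def]; omega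
  have hins : Finset.univ.filter (fun ℓ : Fin H => ℓ ≤ t)
      = insert t (Finset.univ.filter (fun ℓ : Fin H => ℓ ≤ s)) := by
    ext ℓ
    simp only [Finset.mem_filter, Finset.mem_univ, true_and, Finset.mem_insert]
    rw [Fin.le_def, Fin.le_def]
    constructor
    · intro hle
      rcases Nat.lt_or_ge (ℓ : ℕ) (t : ℕ) with h' | h'
      · right; omega
      · left; exact Fin.ext (by omega)
    · rintro (rfl | hle)
      · exact le_rfl
      · omega
  rw [Ysum, hins, Finset.sum_insert (by
    simp only [Finset.mem_filter, Finset.mem_univ, true_and, Fin.le_def]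
    omega), Ysum]
  ring

lemma sum_Ysum (x : Fin n → Fin H → ℝ) (hcol : ∀ t, ∑ i, x i t = 1) (t : Fin H) :
    ∑ i, Ysum x i t = (t : ℕ) + 1 := by
  have : ∑ i, Ysum x i t
      = ∑ ℓ ∈ Finset.univ.filter (fun ℓ : Fin H => ℓ ≤ t), ∑ i, x i ℓ := by
    rw [Finset.sum_comm]
    rfl
  rw [this]
  have : ∑ ℓ ∈ Finset.univ.filter (fun ℓ : Fin H => ℓ ≤ t), ∑ i, x i ℓ
      = ∑ ℓ ∈ Finset.univ.filter (fun ℓ : Fin H => ℓ ≤ t), (1:ℝ) :=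
    Finset.sum_congr rfl (fun ℓ _ => hcol ℓ)
  rw [this, Finset.sum_const, filter_le_eq_Iic, Fin.card_Iic]
  simp

lemma pigeonhole {ι : Type*} [Fintype ι] (f : ι → ℝ) (hsum : (∑ i, f i) ∈ ZR)
    (i : ι) (hi : f i ∉ ZR) : ∃ j, j ≠ i ∧ f j ∉ ZR := by
  by_contra hc
  push_neg at hc
  have : ∑ j ∈ Finset.univ.erase i, f j ∈ ZR := by
    apply Subring.sum_mem
    intro j hj
    exact hc j (Finset.ne_of_mem_erase hj)
  have hsplit : f i = (∑ j, f j) - ∑ j ∈ Finset.univ.erase i, f j := by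
    rw [← Finset.add_sum_erase _ f (Finset.mem_univ i)]; ring
  exact hi (hsplit ▸ ZR.sub_mem hsum this)


/-! ### The flow network -/

/-- Edges: `inl (i,t)` is the seat-assignment edge carrying `x i t`;
`inr (i,t)` is the cumulative edge carrying `Ysum x i t`. -/
abbrev E (n H : ℕ) := (Fin n × Fin H) ⊕ (Fin n × Fin H)

/-- Vertices: `inl (i,t)` is state-time vertex; `inr (some t)` is the seat vertex;
`inr none` is the sink. -/
abbrev V (n H : ℕ) := (Fin n × Fin H) ⊕ (Option (Fin H))

def tailV : E n H → V n H
  | .inl (_, t) => .inr (some t)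
  | .inr (i, t) => .inl (i, t)

def headV : E n H → V n H
  | .inl (i, t) => .inl (i, t)
  | .inr (i, t) => if h : (t : ℕ) + 1 < H then .inl (i, ⟨(t : ℕ) + 1, h⟩) else .inr none

lemma tailV_ne_headV (e : E n H) : tailV e ≠ headV e := by
  rcases e with ⟨i, t⟩ | ⟨i, t⟩
  · simp [tailV, headV]
  · simp only [tailV, headV]
    split
    · intro hc
      rw [Sum.inl.injEq, Prod.mk.injEq] at hc
      have := congrArg Fin.val hc.2
      simp at this
    · simp

lemma headV_inr_eq_inl (j : Fin n) (s : Fin H) (i : Fin n) (t : Fin H) :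
    headV (.inr (j, s)) = (.inl (i, t) : V n H) ↔ j = i ∧ (s : ℕ) + 1 = (t : ℕ) := by
  by_cases h : (s : ℕ) + 1 < H
  · simp only [headV, dif_pos h]
    rw [Sum.inl.injEq, Prod.mk.injEq]
    constructor
    · rintro ⟨rfl, h2⟩; exact ⟨rfl, by rw [← h2]⟩
    · rintro ⟨rfl, h2⟩; exact ⟨rfl, Fin.ext h2⟩
  · simp only [headV, dif_neg h]
    constructor
    · intro hc; exact absurd hc (by simp)
    · rintro ⟨rfl, h2⟩; exact absurd (h2 ▸ t.isLt) h

lemma headV_inr_eq_none (j : Fin n) (s : Fin H) :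
    headV (.inr (j, s)) = (.inr none : V n H) ↔ (s : ℕ) + 1 = H := by
  by_cases h : (s : ℕ) + 1 < H
  · simp only [headV, dif_pos h, reduceCtorEq, false_iff]; omega
  · have := s.isLt
    simp only [headV, dif_neg h, Sum.inr.injEq]
    constructor <;> intro <;> first | omega | trivial

/-- Coefficient of edge `e` at vertex `v` in the boundary map. -/
def coef (e : E n H) (v : V n H) : ℝ :=
  (if tailV e = v then 1 else 0) - (if headV e = v then 1 else 0)

lemma coef_eq_zero_of_not_incident {e : E n H} {v : V n H}
    (h1 : tailV e ≠ v) (h2 : headV e ≠ v) : coef e v = 0 := by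
  simp [coef, h1, h2]

/-- Fractional edges. -/
def fracE (x : Fin n → Fin H → ℝ) : E n H → Prop
  | .inl (i, t) => x i t ∉ ZR
  | .inr (i, t) => Ysum x i t ∉ ZR


def inc (e : E n H) (v : V n H) : Prop := tailV e = v ∨ headV e = v

lemma inc_seat {e : E n H} {t : Fin H} :
    inc e (.inr (some t)) ↔ ∃ j, e = .inl (j, t) := by
  rcases e with ⟨j, s⟩ | ⟨j, s⟩
  · simp only [inc, tailV, headV]
    constructor
    · rintro (h | h)
      · rw [Sum.inr.injEq, Option.some.injEq] at h; exact ⟨j, by rw [h]⟩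
      · exact absurd h (by simp)
    · rintro ⟨j', hj⟩
      rw [Sum.inl.injEq, Prod.mk.injEq] at hj
      left; rw [hj.2]
  · simp only [inc, tailV]
    constructor
    · rintro (h | h)
      · exact absurd h (by simp)
      · by_cases hlt : (s : ℕ) + 1 < H <;> simp [headV, hlt] at h
    · rintro ⟨j', hj⟩; exact absurd hj (by simp)

lemma inc_sink {e : E n H} :
    inc e (.inr none) ↔ ∃ j s, e = .inr (j, s) ∧ (s : ℕ) + 1 = H := by
  rcases e with ⟨j, s⟩ | ⟨j, s⟩
  · simp only [inc, tailV, headV]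
    constructor
    · rintro (h | h) <;> exact absurd h (by simp)
    · rintro ⟨j', s', hj, _⟩; exact absurd hj (by simp)
  · simp only [inc, tailV]
    constructor
    · rintro (h | h)
      · exact absurd h (by simp)
      · exact ⟨j, s, rfl, (headV_inr_eq_none j s).1 h⟩
    · rintro ⟨j', s', hj, hs⟩
      rw [Sum.inr.injEq, Prod.mk.injEq] at hj
      right
      rw [hj.1, hj.2]
      exact (headV_inr_eq_none j' s').2 hs

lemma inc_state {e : E n H} {i : Fin n} {t : Fin H} :
    inc e (.inl (i, t)) ↔
      e = .inl (i, t) ∨ e = .inr (i, t) ∨ ∃ s, e = .inr (i, s) ∧ (s : ℕ) + 1 = (t : ℕ) := by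
  rcases e with ⟨j, s⟩ | ⟨j, s⟩
  · simp only [inc, tailV, headV]
    constructor
    · rintro (h | h)
      · exact absurd h (by simp)
      · rw [Sum.inl.injEq, Prod.mk.injEq] at h
        left; rw [h.1, h.2]
    · rintro (h | h | ⟨s', h, _⟩)
      · right; simpa [headV] using h
      · exact absurd h (by simp)
      · exact absurd h (by simp)
  · simp only [inc, tailV]
    constructor
    · rintro (h | h)
      · rw [Sum.inl.injEq] at h
        right; left; rw [h]
      · rw [headV_inr_eq_inl] at h
        right; right; exact ⟨s, by rw [h.1], h.2⟩
    · rintro (h | h | ⟨s', h, hs⟩)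
      · exact absurd h (by simp)
      · rw [Sum.inr.injEq] at h
        left; rw [h]
      · rw [Sum.inr.injEq, Prod.mk.injEq] at h
        right
        rw [headV_inr_eq_inl, h.1, h.2]
        exact ⟨rfl, hs⟩

/-- Degree lemma: every touched vertex touches at least two distinct fractional edges. -/
lemma two_incident (x : Fin n → Fin H → ℝ) (hcol : ∀ t, ∑ i, x i t = 1) (hH : 1 ≤ H)
    (v : V n H) (e : E n H) (he : fracE x e) (hev : inc e v) :
    ∃ e₁ e₂ : E n H, e₁ ≠ e₂ ∧ fracE x e₁ ∧ fracE x e₂ ∧ inc e₁ v ∧ inc e₂ v := by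
  rcases v with ⟨i, t⟩ | (_ | t)
  · -- state vertex (i,t)
    rcases Nat.eq_zero_or_pos (t : ℕ) with ht0 | htpos
    · -- t = 0 : Ysum x i t = x i t
      have hY : Ysum x i t = x i t := Ysum_zero x i t ht0
      have hfrac : x i t ∉ ZR := by
        rw [inc_state] at hev
        rcases hev with rfl | rfl | ⟨s, rfl, hs⟩
        · exact he
        · rw [fracE, hY] at he; exact he
        · omega
      exact ⟨.inl (i, t), .inr (i, t), by simp, hfrac, by rw [fracE, hY]; exact hfrac,
        inc_state.2 (Or.inl rfl), inc_state.2 (Or.inr (Or.inl rfl))⟩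
    · -- t = s+1
      set s : Fin H := ⟨(t : ℕ) - 1, by omega⟩ with hs
      have hst : (s : ℕ) + 1 = (t : ℕ) := by simp [hs]; omega
      have hsum : Ysum x i t = Ysum x i s + x i t := Ysum_succ x i s t hst
      have hxe : inc (.inl (i, t) : E n H) (.inl (i, t) : V n H) := inc_state.2 (Or.inl rfl)
      have hye : inc (.inr (i, t) : E n H) (.inl (i, t) : V n H) := inc_state.2 (Or.inr (Or.inl rfl))
      have hse : inc (.inr (i, s) : E n H) (.inl (i, t) : V n H) :=
        inc_state.2 (Or.inr (Or.inr ⟨s, rfl, hst⟩))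
      have hne1 : (.inl (i, t) : E n H) ≠ .inr (i, t) := by simp
      have hne2 : (.inl (i, t) : E n H) ≠ .inr (i, s) := by simp
      have hne3 : (.inr (i, t) : E n H) ≠ .inr (i, s) := by
        simp only [ne_eq, Sum.inr.injEq, Prod.mk.injEq, not_and]
        intro _ hc
        rw [hc] at hst; omega
      by_cases hx : x i t ∈ ZR
      · -- then Y t frac ↔ Y s frac; and the touching edge is one of the y-edges
        have key : Ysum x i t ∉ ZR ∧ Ysum x i s ∉ ZR := by
          have hiff : Ysum x i t ∈ ZR ↔ Ysum x i s ∈ ZR := by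
            constructor
            · intro hh
              have : Ysum x i s = Ysum x i t - x i t := by rw [hsum]; ring
              rw [this]; exact ZR.sub_mem hh hx
            · intro hh; rw [hsum]; exact ZR.add_mem hh hx
          rw [inc_state] at hev
          rcases hev with rfl | rfl | ⟨s', rfl, hs'⟩
          · exact absurd hx he
          · exact ⟨he, fun hc => he (hiff.2 hc)⟩
          · have : s' = s := Fin.ext (by omega)
            rw [this] at he
            exact ⟨fun hc => he (hiff.1 hc), he⟩
        exact ⟨.inr (i, t), .inr (i, s), hne3, key.1, key.2, hye, hse⟩
      · -- x i t fractional
        by_cases hys : Ysum x i s ∈ ZR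
        · have : Ysum x i t ∉ ZR := by
            rw [hsum]; intro hc
            exact hx (by
              have : x i t = (Ysum x i s + x i t) - Ysum x i s := by ring
              rw [this]; exact ZR.sub_mem hc hys)
          exact ⟨.inl (i, t), .inr (i, t), hne1, hx, this, hxe, hye⟩
        · exact ⟨.inl (i, t), .inr (i, s), hne2, hx, hys, hxe, hse⟩
  · -- sink
    obtain ⟨j, s, rfl, hsH⟩ := inc_sink.1 hev
    have hYj : Ysum x j s ∉ ZR := he
    have hsumY : (∑ i, Ysum x i s) ∈ ZR := by
      rw [sum_Ysum x hcol s]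
      exact ⟨(s : ℕ) + 1, by simp⟩
    obtain ⟨j', hj', hfj'⟩ := pigeonhole (fun i => Ysum x i s) hsumY j hYj
    exact ⟨.inr (j, s), .inr (j', s), by simp [Ne.symm hj'], hYj, hfj',
      inc_sink.2 ⟨j, s, rfl, hsH⟩, inc_sink.2 ⟨j', s, rfl, hsH⟩⟩
  · -- seat vertex t
    obtain ⟨j, rfl⟩ := inc_seat.1 hev
    have hxj : x j t ∉ ZR := he
    obtain ⟨j', hj', hfj'⟩ := pigeonhole (fun i => x i t) (by rw [hcol t]; exact ZR.one_mem) j hxj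
    exact ⟨.inl (j, t), .inl (j', t), by simp [Ne.symm hj'], hxj, hfj',
      inc_seat.2 ⟨j, rfl⟩, inc_seat.2 ⟨j', rfl⟩⟩


/-- Summation functional. -/
def sumOver (ι : Type*) [Fintype ι] : (ι → ℝ) →ₗ[ℝ] ℝ where
  toFun f := ∑ i, f i
  map_add' f g := Finset.sum_add_distrib
  map_smul' c f := by simp [Finset.mul_sum]

/-- Key existence: a nonzero circulation supported on the fractional edges. -/
lemma exists_circulation (x : Fin n → Fin H → ℝ) (hcol : ∀ t, ∑ i, x i t = 1) (hH : 1 ≤ H)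
    (hne : ∃ e : E n H, fracE x e) :
    ∃ δ : E n H → ℝ, δ ≠ 0 ∧ (∀ e, ¬ fracE x e → δ e = 0) ∧
      (∀ v : V n H, ∑ e, coef e v * δ e = 0) := by
  set S : Finset (E n H) := Finset.univ.filter (fracE x) with hS
  set V' : Finset (V n H) := Finset.univ.filter (fun v => ∃ e ∈ S, inc e v) with hV'
  have hmemS : ∀ e : E n H, e ∈ S ↔ fracE x e := by intro e; simp [hS]
  have hmemV' : ∀ v : V n H, v ∈ V' ↔ ∃ e ∈ S, inc e v := by intro v; simp [hV']
  have htail_mem : ∀ e ∈ S, tailV e ∈ V' := fun e he => (hmemV' _).2 ⟨e, he, Or.inl rfl⟩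
  have hhead_mem : ∀ e ∈ S, headV e ∈ V' := fun e he => (hmemV' _).2 ⟨e, he, Or.inr rfl⟩
  have hSne : S.Nonempty := by obtain ⟨e, he⟩ := hne; exact ⟨e, (hmemS e).2 he⟩
  have hV'ne : V'.Nonempty := by
    obtain ⟨e, he⟩ := hSne; exact ⟨tailV e, htail_mem e he⟩
  -- counting : V'.card ≤ S.card
  have hcount : V'.card ≤ S.card := by
    have hdeg : ∀ v ∈ V', 2 ≤ (S.filter (fun e => inc e v)).card := by
      intro v hv
      obtain ⟨e, heS, hev⟩ := (hmemV' v).1 hv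
      obtain ⟨e₁, e₂, hne12, hf1, hf2, hi1, hi2⟩ :=
        two_incident x hcol hH v e ((hmemS e).1 heS) hev
      have hm1 : e₁ ∈ S.filter (fun e => inc e v) :=
        Finset.mem_filter.2 ⟨(hmemS e₁).2 hf1, hi1⟩
      have hm2 : e₂ ∈ S.filter (fun e => inc e v) :=
        Finset.mem_filter.2 ⟨(hmemS e₂).2 hf2, hi2⟩
      have := Finset.one_lt_card.2 ⟨e₁, hm1, e₂, hm2, hne12⟩
      omega
    have hend : ∀ e ∈ S, (V'.filter (fun v => inc e v)).card = 2 := by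
      intro e he
      have : V'.filter (fun v => inc e v) = {tailV e, headV e} := by
        ext v
        simp only [Finset.mem_filter, Finset.mem_insert, Finset.mem_singleton]
        constructor
        · rintro ⟨_, h | h⟩
          · left; exact h.symm
          · right; exact h.symm
        · rintro (rfl | rfl)
          · exact ⟨htail_mem e he, Or.inl rfl⟩
          · exact ⟨hhead_mem e he, Or.inr rfl⟩
      rw [this, Finset.card_pair (tailV_ne_headV e)]
    have h1 : 2 * V'.card ≤ ∑ v ∈ V', (S.filter (fun e => inc e v)).card := by
      rw [two_mul]
      calc V'.card + V'.card = ∑ _v ∈ V', 2 := by rw [Finset.sum_const]; ring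
      _ ≤ _ := Finset.sum_le_sum hdeg
    have h2 : ∑ v ∈ V', (S.filter (fun e => inc e v)).card
        = ∑ e ∈ S, (V'.filter (fun v => inc e v)).card := by
      simp only [Finset.card_filter]
      exact Finset.sum_comm
    have h3 : ∑ e ∈ S, (V'.filter (fun v => inc e v)).card = 2 * S.card := by
      rw [Finset.sum_congr rfl hend, Finset.sum_const]; ring
    omega
  -- linear algebra
  set φ : (↥S → ℝ) →ₗ[ℝ] (↥V' → ℝ) :=
    { toFun := fun δ v => ∑ e : ↥S, coef e.1 v.1 * δ e
      map_add' := by intro a b; funext v; simp [mul_add, Finset.sum_add_distrib]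
      map_smul' := by intro c a; funext v; simp [Finset.mul_sum, mul_left_comm] } with hφ
  have hrange : ∀ δ, sumOver (↥V') (φ δ) ∈ ({0} : Set ℝ) := by
    intro δ
    have : sumOver (↥V') (φ δ) = ∑ e : ↥S, (∑ v : ↥V', coef e.1 v.1) * δ e := by
      simp only [sumOver, hφ, LinearMap.coe_mk, AddHom.coe_mk, Finset.sum_mul]
      exact Finset.sum_comm
    rw [this]
    have hz : ∀ e : ↥S, (∑ v : ↥V', coef e.1 v.1) = 0 := by
      intro e
      have : ∑ v : ↥V', coef e.1 v.1 = ∑ v ∈ V', coef e.1 v := Finset.sum_coe_sort V' _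
      rw [this]
      simp only [coef, Finset.sum_sub_distrib]
      rw [Finset.sum_ite_eq V' (tailV e.1) (fun _ => (1:ℝ)),
        Finset.sum_ite_eq V' (headV e.1) (fun _ => (1:ℝ)),
        if_pos (htail_mem e.1 e.2), if_pos (hhead_mem e.1 e.2), sub_self]
    simp only [Set.mem_singleton_iff]
    rw [Finset.sum_congr rfl (fun e _ => by rw [hz e, zero_mul])]
    exact Finset.sum_const_zero
  have hrange' : ∀ δ, φ δ ∈ LinearMap.ker (sumOver (↥V')) := by
    intro δ; exact Set.mem_singleton_iff.1 (hrange δ)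
  -- the summation functional is surjective
  have hsurj : Function.Surjective (sumOver (↥V')) := by
    intro c
    obtain ⟨v₀, hv₀⟩ := hV'ne
    refine ⟨fun v => if v = ⟨v₀, hv₀⟩ then c else 0, ?_⟩
    simp [sumOver]
  have hrankker : Module.finrank ℝ (LinearMap.ker (sumOver (↥V'))) + 1
      = Fintype.card ↥V' := by
    have h1 := LinearMap.finrank_range_add_finrank_ker (sumOver (↥V'))
    rw [LinearMap.range_eq_top.2 hsurj, finrank_top, Module.finrank_self,
      Module.finrank_fintype_fun_eq_card] at h1
    omega
  have hnotinj : ¬ Function.Injective φ := by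
    intro hinj
    have hinj' : Function.Injective
        (φ.codRestrict (LinearMap.ker (sumOver (↥V'))) hrange') := by
      intro a b hab
      exact hinj (congrArg Subtype.val hab)
    have hle := LinearMap.finrank_le_finrank_of_injective hinj'
    rw [Module.finrank_fintype_fun_eq_card] at hle
    have hcards : Fintype.card ↥S = S.card := Fintype.card_coe S
    have hcardv : Fintype.card ↥V' = V'.card := Fintype.card_coe V'
    have hS1 : 1 ≤ S.card := Finset.card_pos.2 hSne
    omega
  -- extract a nonzero kernel element
  have : ∃ δ₀ : ↥S → ℝ, φ δ₀ = 0 ∧ δ₀ ≠ 0 := by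
    by_contra hc
    push_neg at hc
    apply hnotinj
    have hker : LinearMap.ker φ = ⊥ := by
      rw [Submodule.eq_bot_iff]
      intro a ha
      by_contra ha0
      exact ha0 (hc a (LinearMap.mem_ker.1 ha)) 
    exact LinearMap.ker_eq_bot.1 hker
  obtain ⟨δ₀, hδker, hδne⟩ := this
  refine ⟨fun e => if h : e ∈ S then δ₀ ⟨e, h⟩ else 0, ?_, ?_, ?_⟩
  · -- nonzero
    intro hc
    apply hδne
    funext e
    have := congrFun hc e.1
    simpa [e.2] using this
  · intro e he
    exact dif_neg (fun hmem => he ((hmemS e).1 hmem))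
  · intro v
    have hsplit : ∑ e : E n H, coef e v * (if h : e ∈ S then δ₀ ⟨e, h⟩ else 0)
        = ∑ e ∈ S, coef e v * (if h : e ∈ S then δ₀ ⟨e, h⟩ else 0) := by
      symm
      apply Finset.sum_subset (Finset.subset_univ S)
      intro e _ he
      rw [dif_neg he, mul_zero]
    rw [hsplit]
    have hattach : ∑ e ∈ S, coef e v * (if h : e ∈ S then δ₀ ⟨e, h⟩ else 0)
        = ∑ e : ↥S, coef e.1 v * δ₀ e := by
      rw [← Finset.sum_coe_sort S]
      apply Finset.sum_congr rfl
      intro e _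
      rw [dif_pos e.2]
    rw [hattach]
    by_cases hv : v ∈ V'
    · have := congrFun hδker ⟨v, hv⟩
      simpa [hφ] using this
    · apply Finset.sum_eq_zero
      intro e _
      have hni : ¬ inc e.1 v := by
        intro hic
        exact hv ((hmemV' v).2 ⟨e.1, e.2, hic⟩)
      rw [coef_eq_zero_of_not_incident (fun h => hni (Or.inl h)) (fun h => hni (Or.inr h)),
        zero_mul]


section Flux
variable (δ : E n H → ℝ) (hflux : ∀ v : V n H, ∑ e, coef e v * δ e = 0)

include hflux in
lemma flux_seat (t : Fin H) : ∑ j, δ (Sum.inl (j, t)) = 0 := by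
  have h := hflux (Sum.inr (some t))
  rw [Fintype.sum_sum_type] at h
  have h2 : ∀ p : Fin n × Fin H, coef (Sum.inr p) (Sum.inr (some t)) * δ (Sum.inr p) = 0 := by
    rintro ⟨j, s⟩
    rw [coef_eq_zero_of_not_incident, zero_mul]
    · simp [tailV]
    · by_cases hlt : (s : ℕ) + 1 < H <;> simp [headV, hlt]
  rw [Finset.sum_congr rfl (fun p _ => h2 p), Finset.sum_const_zero, add_zero] at h
  have h1 : ∀ p : Fin n × Fin H, coef (Sum.inl p) (Sum.inr (some t)) * δ (Sum.inl p)
      = (if p.2 = t then δ (Sum.inl p) else 0) := by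
    rintro ⟨j, s⟩
    simp only [coef, tailV, headV]
    simp [Sum.inr.injEq, Option.some.injEq, ite_mul, sub_mul]
  rw [Finset.sum_congr rfl (fun p _ => h1 p), Fintype.sum_prod_type] at h
  calc ∑ j, δ (Sum.inl (j, t))
      = ∑ j, ∑ s : Fin H, (if s = t then δ (Sum.inl (j, s)) else 0) := by
        apply Finset.sum_congr rfl
        intro j _
        rw [Finset.sum_ite_eq' Finset.univ t (fun s => δ (Sum.inl (j, s))),
          if_pos (Finset.mem_univ t)]
    _ = 0 := h

include hflux in
lemma flux_state (i : Fin n) (t : Fin H) :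
    δ (Sum.inr (i, t)) = δ (Sum.inl (i, t))
      + ∑ p : Fin n × Fin H,
          (if p.1 = i ∧ (p.2 : ℕ) + 1 = (t : ℕ) then δ (Sum.inr p) else 0) := by
  have h := hflux (Sum.inl (i, t))
  rw [Fintype.sum_sum_type] at h
  have h1 : ∀ p : Fin n × Fin H, coef (Sum.inl p) (Sum.inl (i, t)) * δ (Sum.inl p)
      = -(if p = (i, t) then δ (Sum.inl p) else 0) := by
    rintro ⟨j, s⟩
    simp only [coef, tailV]
    have : (Sum.inr (some s) : V n H) ≠ Sum.inl (i, t) := by simp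
    erw [if_neg this]
    have : headV (Sum.inl (j, s)) = (Sum.inl (i, t) : V n H) ↔ (j, s) = (i, t) := by
      simp [headV]
    by_cases hc : (j, s) = (i, t)
    · rw [if_pos (this.2 hc), if_pos hc]; ring
    · rw [if_neg (fun hh => hc (this.1 hh)), if_neg hc]; ring
  have h2 : ∀ p : Fin n × Fin H, coef (Sum.inr p) (Sum.inl (i, t)) * δ (Sum.inr p)
      = (if p = (i, t) then δ (Sum.inr p) else 0)
        - (if p.1 = i ∧ (p.2 : ℕ) + 1 = (t : ℕ) then δ (Sum.inr p) else 0) := by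
    rintro ⟨j, s⟩
    simp only [coef, tailV]
    have ht : (Sum.inl (j, s) : V n H) = Sum.inl (i, t) ↔ (j, s) = (i, t) := by simp
    have hh := headV_inr_eq_inl j s i t
    by_cases hc1 : (j, s) = (i, t) <;> by_cases hc2 : j = i ∧ (s : ℕ) + 1 = (t : ℕ)
    · erw [if_pos (ht.2 hc1), if_pos (hh.2 hc2), if_pos hc1, if_pos hc2]; ring
    · erw [if_pos (ht.2 hc1), if_neg (fun hx => hc2 (hh.1 hx)), if_pos hc1, if_neg hc2]; ring
    · erw [if_neg (fun hx => hc1 (ht.1 hx)), if_pos (hh.2 hc2), if_neg hc1, if_pos hc2]; ring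
    · erw [if_neg (fun hx => hc1 (ht.1 hx)), if_neg (fun hx => hc2 (hh.1 hx)),
        if_neg hc1, if_neg hc2]; ring
  rw [Finset.sum_congr rfl (fun p _ => h1 p), Finset.sum_congr rfl (fun p _ => h2 p),
    Finset.sum_neg_distrib, Finset.sum_sub_distrib,
    Finset.sum_ite_eq' Finset.univ ((i, t) : Fin n × Fin H) (fun p => δ (Sum.inl p)),
    Finset.sum_ite_eq' Finset.univ ((i, t) : Fin n × Fin H) (fun p => δ (Sum.inr p)),
    if_pos (Finset.mem_univ _), if_pos (Finset.mem_univ _)] at h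
  linarith [h]

include hflux in
lemma flux_state_zero (i : Fin n) (t : Fin H) (ht : (t : ℕ) = 0) :
    δ (Sum.inr (i, t)) = δ (Sum.inl (i, t)) := by
  rw [flux_state δ hflux i t]
  have : ∀ p : Fin n × Fin H,
      (if p.1 = i ∧ (p.2 : ℕ) + 1 = (t : ℕ) then δ (Sum.inr p) else 0) = 0 := by
    intro p
    rw [if_neg]
    rintro ⟨_, hc⟩
    omega
  rw [Finset.sum_congr rfl (fun p _ => this p), Finset.sum_const_zero, add_zero]

include hflux in
lemma flux_state_succ (i : Fin n) (s t : Fin H) (hst : (s : ℕ) + 1 = (t : ℕ)) :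
    δ (Sum.inr (i, t)) = δ (Sum.inr (i, s)) + δ (Sum.inl (i, t)) := by
  rw [flux_state δ hflux i t]
  have : ∀ p : Fin n × Fin H,
      (if p.1 = i ∧ (p.2 : ℕ) + 1 = (t : ℕ) then δ (Sum.inr p) else 0)
        = (if p = (i, s) then δ (Sum.inr p) else 0) := by
    intro p
    by_cases hc : p = (i, s)
    · rw [if_pos _, if_pos hc]
      rw [hc]
      exact ⟨rfl, hst⟩
    · rw [if_neg _, if_neg hc]
      rintro ⟨h1, h2⟩
      apply hc
      have : p.2 = s := Fin.ext (by omega)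
      rw [← h1, ← this]
  rw [Finset.sum_congr rfl (fun p _ => this p),
    Finset.sum_ite_eq' Finset.univ ((i, s) : Fin n × Fin H) (fun p => δ (Sum.inr p)),
    if_pos (Finset.mem_univ _)]
  ring

end Flux

lemma exists_perturb (x : Fin n → Fin H → ℝ) (hcol : ∀ t, ∑ i, x i t = 1) (hH : 1 ≤ H)
    (hne : ∃ e : E n H, fracE x e) :
    ∃ d : Fin n → Fin H → ℝ,
      (∃ i t, d i t ≠ 0) ∧
      (∀ t, ∑ i, d i t = 0) ∧
      (∀ i t, x i t ∈ ZR → d i t = 0) ∧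
      (∀ i t, Ysum x i t ∈ ZR → Ysum d i t = 0) := by
  obtain ⟨δ, hδne, hδsupp, hflux⟩ := exists_circulation x hcol hH hne
  set d : Fin n → Fin H → ℝ := fun i t => δ (Sum.inl (i, t)) with hd
  have hpre : ∀ (i : Fin n) (t : Fin H), Ysum d i t = δ (Sum.inr (i, t)) := by
    intro i t
    have key : ∀ m : ℕ, ∀ t : Fin H, (t : ℕ) = m → Ysum d i t = δ (Sum.inr (i, t)) := by
      intro m
      induction m with
      | zero =>
        intro t ht
        rw [Ysum_zero d i t ht, flux_state_zero δ hflux i t ht]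
      | succ m ih =>
        intro t ht
        have hm : m < H := by have := t.isLt; omega
        set s : Fin H := ⟨m, hm⟩ with hs
        have hst : (s : ℕ) + 1 = (t : ℕ) := by rw [hs]; simp; omega
        rw [Ysum_succ d i s t hst, flux_state_succ δ hflux i s t hst, ih s rfl]
    exact key (t : ℕ) t rfl
  refine ⟨d, ?_, ?_, ?_, ?_⟩
  · by_contra hc
    push_neg at hc
    apply hδne
    funext e
    rcases e with ⟨i, t⟩ | ⟨i, t⟩
    · exact hc i t
    · show δ (Sum.inr (i, t)) = 0
      rw [← hpre i t]
      exact Finset.sum_eq_zero (fun ℓ _ => hc i ℓ)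
  · intro t
    exact flux_seat δ hflux t
  · intro i t hx
    exact hδsupp (Sum.inl (i, t)) (fun hf => hf hx)
  · intro i t hY
    rw [hpre i t]
    exact hδsupp (Sum.inr (i, t)) (fun hf => hf hY)



theorem main {n : ℕ} (hn : 1 ≤ n) (p : Fin n → ℕ) (hp : ∀ i, 0 < p i)
    (H : ℕ) (hH : 1 ≤ H)
    (x : Fin n → Fin H → ℝ) (hx : x ∈ Set.extremePoints ℝ (apportionmentPolytope p H)) :
    ∀ (i : Fin n) (t : Fin H), x i t = 0 ∨ x i t = 1 := by
  obtain ⟨hcol, hquota, hnn⟩ := hx.1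
  set q : Fin n → Fin H → ℝ :=
    fun i t => (((t : ℕ) + 1 : ℝ)) * (p i : ℝ) / (∑ j, (p j : ℝ)) with hqdef
  have hquota' : ∀ (i : Fin n) (t : Fin H),
      ((⌊q i t⌋ : ℝ) ≤ Ysum x i t ∧ Ysum x i t ≤ (⌈q i t⌉ : ℝ)) := fun i t => hquota i t
  -- Main claim : no fractional edge
  have hint : ∀ e : E n H, ¬ fracE x e := by
    by_contra hc
    push_neg at hc
    obtain ⟨d, ⟨i₀, t₀, hd₀⟩, hdcol, hdx, hdY⟩ := exists_perturb x hcol hH hc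
    -- bound on the perturbation
    set M : ℝ := (∑ i, ∑ t, |d i t|) + 1 with hMdef
    have habs_nonneg : (0:ℝ) ≤ ∑ i, ∑ t, |d i t| :=
      Finset.sum_nonneg (fun i _ => Finset.sum_nonneg (fun t _ => abs_nonneg _))
    have hM0 : 0 < M := by rw [hMdef]; linarith
    have hdM : ∀ i t, |d i t| ≤ M := by
      intro i t
      have h1 : |d i t| ≤ ∑ t', |d i t'| :=
        Finset.single_le_sum (fun t' _ => abs_nonneg (d i t')) (Finset.mem_univ t)
      have h2 : (∑ t', |d i t'|) ≤ ∑ i', ∑ t', |d i' t'| :=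
        Finset.single_le_sum (f := fun i' => ∑ t', |d i' t'|)
          (fun i' _ => Finset.sum_nonneg (fun t' _ => abs_nonneg _)) (Finset.mem_univ i)
      rw [hMdef]; linarith
    have hYM : ∀ i t, |Ysum d i t| ≤ M := by
      intro i t
      have h1 : |Ysum d i t| ≤ ∑ ℓ ∈ Finset.univ.filter (fun ℓ : Fin H => ℓ ≤ t), |d i ℓ| :=
        Finset.abs_sum_le_sum_abs _ _
      have h2 : (∑ ℓ ∈ Finset.univ.filter (fun ℓ : Fin H => ℓ ≤ t), |d i ℓ|) ≤ ∑ ℓ, |d i ℓ| :=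
        Finset.sum_le_sum_of_subset_of_nonneg (Finset.filter_subset _ _)
          (fun ℓ _ _ => abs_nonneg _)
      have h3 : (∑ ℓ, |d i ℓ|) ≤ ∑ i', ∑ ℓ, |d i' ℓ| :=
        Finset.single_le_sum (f := fun i' => ∑ ℓ, |d i' ℓ|)
          (fun i' _ => Finset.sum_nonneg (fun ℓ _ => abs_nonneg _)) (Finset.mem_univ i)
      rw [hMdef]; linarith
    -- the minimum slack
    set g₁ : Fin n × Fin H → ℝ := fun pr => if x pr.1 pr.2 ∈ ZR then 1 else x pr.1 pr.2 with hg₁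
    set g₂ : Fin n × Fin H → ℝ :=
      fun pr => if Ysum x pr.1 pr.2 ∈ ZR then 1
        else Ysum x pr.1 pr.2 - (⌊q pr.1 pr.2⌋ : ℝ) with hg₂
    set g₃ : Fin n × Fin H → ℝ :=
      fun pr => if Ysum x pr.1 pr.2 ∈ ZR then 1
        else (⌈q pr.1 pr.2⌉ : ℝ) - Ysum x pr.1 pr.2 with hg₃
    set B : Finset ℝ :=
      insert 1 ((Finset.univ.image g₁) ∪ (Finset.univ.image g₂) ∪ (Finset.univ.image g₃))
      with hB
    have hBne : B.Nonempty := ⟨1, Finset.mem_insert_self _ _⟩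
    set σ : ℝ := B.min' hBne with hσ
    have hBpos : ∀ b ∈ B, 0 < b := by
      intro b hb
      rw [hB] at hb
      rcases Finset.mem_insert.1 hb with rfl | hb
      · norm_num
      rcases Finset.mem_union.1 hb with hb | hb
      · rcases Finset.mem_union.1 hb with hb | hb
        · obtain ⟨pr, _, rfl⟩ := Finset.mem_image.1 hb
          simp only [hg₁]
          by_cases hxz : x pr.1 pr.2 ∈ ZR
          · rw [if_pos hxz]; norm_num
          · rw [if_neg hxz]
            rcases lt_or_eq_of_le (hnn pr.1 pr.2) with h | h
            · exact h
            · exact absurd (h ▸ ZR.zero_mem) hxz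
        · obtain ⟨pr, _, rfl⟩ := Finset.mem_image.1 hb
          simp only [hg₂]
          by_cases hxz : Ysum x pr.1 pr.2 ∈ ZR
          · rw [if_pos hxz]; norm_num
          · rw [if_neg hxz]
            rcases lt_or_eq_of_le (hquota' pr.1 pr.2).1 with h | h
            · linarith
            · exact absurd (h ▸ intCast_mem_ZR ⌊q pr.1 pr.2⌋) hxz
      · obtain ⟨pr, _, rfl⟩ := Finset.mem_image.1 hb
        simp only [hg₃]
        by_cases hxz : Ysum x pr.1 pr.2 ∈ ZR
        · rw [if_pos hxz]; norm_num
        · rw [if_neg hxz]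
          rcases lt_or_eq_of_le (hquota' pr.1 pr.2).2 with h | h
          · linarith
          · exact absurd (h.symm ▸ intCast_mem_ZR ⌈q pr.1 pr.2⌉) hxz
    have hσpos : 0 < σ := hBpos _ (B.min'_mem hBne)
    have hσ₁ : ∀ i t, x i t ∉ ZR → σ ≤ x i t := by
      intro i t hxz
      have : g₁ (i, t) ∈ B := by
        rw [hB]
        exact Finset.mem_insert_of_mem (Finset.mem_union_left _ (Finset.mem_union_left _
          (Finset.mem_image_of_mem g₁ (Finset.mem_univ (i, t)))))
      have hle := B.min'_le _ this
      simp only [hg₁] at hle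
      simpa [if_neg hxz] using hle
    have hσ₂ : ∀ i t, Ysum x i t ∉ ZR → σ ≤ Ysum x i t - (⌊q i t⌋ : ℝ) := by
      intro i t hxz
      have : g₂ (i, t) ∈ B := by
        rw [hB]
        exact Finset.mem_insert_of_mem (Finset.mem_union_left _ (Finset.mem_union_right _
          (Finset.mem_image_of_mem g₂ (Finset.mem_univ (i, t)))))
      have hle := B.min'_le _ this
      simp only [hg₂] at hle
      simpa [if_neg hxz] using hle
    have hσ₃ : ∀ i t, Ysum x i t ∉ ZR → σ ≤ (⌈q i t⌉ : ℝ) - Ysum x i t := by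
      intro i t hxz
      have : g₃ (i, t) ∈ B := by
        rw [hB]
        exact Finset.mem_insert_of_mem (Finset.mem_union_right _
          (Finset.mem_image_of_mem g₃ (Finset.mem_univ (i, t))))
      have hle := B.min'_le _ this
      simp only [hg₃] at hle
      simpa [if_neg hxz] using hle
    set ε : ℝ := σ / M with hε
    have hεpos : 0 < ε := div_pos hσpos hM0
    have hbound : ∀ c : ℝ, |c| ≤ M → |ε * c| ≤ σ := by
      intro c hc
      rw [abs_mul, abs_of_pos hεpos, hε]
      rw [div_mul_eq_mul_div, div_le_iff₀ hM0]
      have h1 : σ * |c| ≤ σ * M := mul_le_mul_of_nonneg_left hc (le_of_lt hσpos)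
      linarith
    -- the two perturbed points
    set x₁ : Fin n → Fin H → ℝ := fun i t => x i t + ε * d i t with hx₁
    set x₂ : Fin n → Fin H → ℝ := fun i t => x i t - ε * d i t with hx₂
    have hY₁ : ∀ i t, Ysum x₁ i t = Ysum x i t + ε * Ysum d i t := by
      intro i t
      rw [Ysum, Ysum, Ysum, hx₁, Finset.mul_sum, ← Finset.sum_add_distrib]
    have hY₂ : ∀ i t, Ysum x₂ i t = Ysum x i t - ε * Ysum d i t := by
      intro i t
      rw [Ysum, Ysum, Ysum, hx₂, Finset.mul_sum, ← Finset.sum_sub_distrib]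
    have hmem : ∀ (sgn : ℝ), sgn = 1 ∨ sgn = -1 →
        (fun i t => x i t + sgn * (ε * d i t)) ∈ apportionmentPolytope p H := by
      intro sgn hsgn
      have hsgnabs : |sgn| = 1 := by rcases hsgn with rfl | rfl <;> norm_num
      refine ⟨?_, ?_, ?_⟩
      · intro t
        rw [Finset.sum_add_distrib, hcol t, ← Finset.mul_sum, ← Finset.mul_sum,
          hdcol t, mul_zero, mul_zero, add_zero]
      · intro i t
        have hYs : Ysum (fun i t => x i t + sgn * (ε * d i t)) i t
            = Ysum x i t + sgn * (ε * Ysum d i t) := by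
          rw [Ysum, Ysum, Ysum, Finset.mul_sum, Finset.mul_sum, ← Finset.sum_add_distrib]
        show (⌊q i t⌋ : ℝ) ≤ Ysum (fun i t => x i t + sgn * (ε * d i t)) i t
          ∧ Ysum (fun i t => x i t + sgn * (ε * d i t)) i t ≤ (⌈q i t⌉ : ℝ)
        rw [hYs]
        by_cases hYint : Ysum x i t ∈ ZR
        · rw [hdY i t hYint, mul_zero, mul_zero, add_zero]
          exact hquota' i t
        · have hsl₂ := hσ₂ i t hYint
          have hsl₃ := hσ₃ i t hYint
          have hb : |ε * Ysum d i t| ≤ σ := hbound _ (hYM i t)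
          have hb' : |sgn * (ε * Ysum d i t)| ≤ σ := by
            rw [abs_mul, hsgnabs, one_mul]; exact hb
          have := abs_le.1 hb'
          constructor <;> linarith [this.1, this.2]
      · intro i t
        show 0 ≤ x i t + sgn * (ε * d i t)
        by_cases hxint : x i t ∈ ZR
        · rw [hdx i t hxint, mul_zero, mul_zero, add_zero]
          exact hnn i t
        · have hsl := hσ₁ i t hxint
          have hb : |ε * d i t| ≤ σ := hbound _ (hdM i t)
          have hb' : |sgn * (ε * d i t)| ≤ σ := by
            rw [abs_mul, hsgnabs, one_mul]; exact hb
          have := abs_le.1 hb'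
          linarith [this.1]
    have hmem₁ : x₁ ∈ apportionmentPolytope p H := by
      have := hmem 1 (Or.inl rfl)
      simpa [hx₁, one_mul] using this
    have hmem₂ : x₂ ∈ apportionmentPolytope p H := by
      have := hmem (-1) (Or.inr rfl)
      have heq : (fun i t => x i t + (-1) * (ε * d i t)) = x₂ := by
        funext i t; rw [hx₂]; ring
      rwa [heq] at this
    have hseg : x ∈ openSegment ℝ x₁ x₂ := by
      refine ⟨1/2, 1/2, by norm_num, by norm_num, by norm_num, ?_⟩
      funext i t
      show (1/2 : ℝ) * x₁ i t + (1/2 : ℝ) * x₂ i t = x i t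
      rw [hx₁, hx₂]; ring
    have hcontr := (hx.2 hmem₁ hmem₂ hseg)
    have := congrFun (congrFun hcontr i₀) t₀
    rw [hx₁] at this
    simp only at this
    have : ε * d i₀ t₀ = 0 := by linarith [this]
    rcases mul_eq_zero.1 this with h | h
    · exact absurd h (ne_of_gt hεpos)
    · exact hd₀ h
  -- conclude
  intro i t
  have hxint : x i t ∈ ZR := not_not.1 (fun hc => hint (Sum.inl (i, t)) hc)
  obtain ⟨z, hz0⟩ := hxint
  have hz : (z:ℝ) = x i t := by simpa using hz0
  have h0 : (0:ℝ) ≤ (z:ℝ) := hz ▸ hnn i t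
  have h1 : (z:ℝ) ≤ 1 := by
    rw [hz]
    calc x i t ≤ ∑ j, x j t :=
      Finset.single_le_sum (fun j _ => hnn j t) (Finset.mem_univ i)
    _ = 1 := hcol t
  have h0' : (0:ℤ) ≤ z := by exact_mod_cast h0
  have h1' : z ≤ 1 := by exact_mod_cast h1
  interval_cases z
  · left; rw [← hz]; norm_num
  · right; rw [← hz]; norm_num

end Stmt19

/-- every extreme point of `K(p,H)` has all coordinates in `{0,1}`. -/
theorem stmt_19 {n : ℕ} (hn : 1 ≤ n) (p : Fin n → ℕ) (hp : ∀ i, 0 < p i)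
    (H : ℕ) (hH : 1 ≤ H)
    (x : Fin n → Fin H → ℝ) (hx : x ∈ Set.extremePoints ℝ (apportionmentPolytope p H)) :
    ∀ (i : Fin n) (t : Fin H), x i t = 0 ∨ x i t = 1 :=
  Stmt19.main hn p hp H hH x hx
end
end
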